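/- Let p be a prime with p ≡ 1 (mod 12). Then there are no integers x, y, z with x² + y² + z³ = p³ and z ≡ 6 (mod 12). -/

import Mathlib

/-- A natural number that is `3 mod 4` has a prime `q ≡ 3 mod 4` occurring to an
odd power in its factorization. -/
lemma exists_odd_padic_of_mod_four {A : ℕ} (hA : A % 4 = 3) :
    ∃ q : ℕ, q.Prime ∧ q % 4 = 3 ∧ Odd (padicValNat q A) := by
  by_contra h
  push_neg at h
  have hsq : ∃ x y : ℕ, A = x ^ 2 + y ^ 2 := by
    refine Nat.eq_sq_add_sq_iff.mpr ?_
    intro q hq hq3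
    have := h q (Nat.prime_of_mem_primeFactors hq) hq3
    exact Nat.not_odd_iff_even.mp (by simpa using this)
  obtain ⟨x, y, hxy⟩ := hsq
  have hx : x ^ 2 % 4 = 0 ∨ x ^ 2 % 4 = 1 := by
    have h4 : x % 4 = 0 ∨ x % 4 = 1 ∨ x % 4 = 2 ∨ x % 4 = 3 := by omega
    rw [Nat.pow_mod]
    rcases h4 with h' | h' | h' | h' <;> rw [h'] <;> norm_num
  have hy : y ^ 2 % 4 = 0 ∨ y ^ 2 % 4 = 1 := by
    have h4 : y % 4 = 0 ∨ y % 4 = 1 ∨ y % 4 = 2 ∨ y % 4 = 3 := by omega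
    rw [Nat.pow_mod]
    rcases h4 with h' | h' | h' | h' <;> rw [h'] <;> norm_num
  omega

theorem no_rep_k3 (p : ℕ) (hp : p.Prime) (hp1 : (p : ℤ) ≡ 1 [ZMOD 12]) :
    ¬ ∃ x y z : ℤ, z ≡ 6 [ZMOD 12] ∧ x ^ 2 + y ^ 2 + z ^ 3 = (p : ℤ) ^ 3 := by
  rintro ⟨x, y, z, hz, heq⟩
  have hp' : (p : ℤ) % 12 = 1 := by
    have := hp1; unfold Int.ModEq at this; omega
  have hz' : z % 12 = 6 := by
    have := hz; unfold Int.ModEq at this; omega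
  have hp2 : (2 : ℤ) ≤ (p : ℤ) := by exact_mod_cast hp.two_le
  -- z < p
  have hzp : z < (p : ℤ) := by
    by_contra hlt
    push_neg at hlt
    have hne : z ≠ (p : ℤ) := by omega
    have hlt' : (p : ℤ) < z := lt_of_le_of_ne hlt (Ne.symm hne)
    have : (p : ℤ) ^ 3 < z ^ 3 := by
      apply pow_lt_pow_left₀ hlt' (by linarith) (by norm_num)
    nlinarith [sq_nonneg x, sq_nonneg y]
  set a : ℤ := (p : ℤ) - z with ha_def
  set b : ℤ := (p : ℤ) ^ 2 + (p : ℤ) * z + z ^ 2 with hb_def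
  have ha4 : a % 4 = 3 := by omega
  have hb12 : b % 12 = 7 := by
    have h1 : b ≡ 1 ^ 2 + 1 * 6 + 6 ^ 2 [ZMOD 12] :=
      ((hp1.pow 2).add (hp1.mul hz)).add (hz.pow 2)
    unfold Int.ModEq at h1
    norm_num at h1
    omega
  have ha0 : 0 < a := by omega
  have hb0 : 0 < b := by
    have : 0 ≤ 4 * b := by nlinarith [sq_nonneg (2 * (p : ℤ) + z), sq_nonneg z]
    omega
  have hab : a * b = x ^ 2 + y ^ 2 := by
    have : a * b = (p : ℤ) ^ 3 - z ^ 3 := by ring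
    linarith
  -- move to naturals
  set A : ℕ := a.toNat with hA_def
  set B : ℕ := b.toNat with hB_def
  have hAa : (A : ℤ) = a := Int.toNat_of_nonneg ha0.le
  have hBb : (B : ℤ) = b := Int.toNat_of_nonneg hb0.le
  have hN : A * B = x.natAbs ^ 2 + y.natAbs ^ 2 := by
    have : ((A * B : ℕ) : ℤ) = ((x.natAbs ^ 2 + y.natAbs ^ 2 : ℕ) : ℤ) := by
      push_cast [Int.natAbs_sq]
      rw [hAa, hBb, hab]
      simp [sq_abs]
    exact_mod_cast this
  have heven : ∀ q : ℕ, q.Prime → q % 4 = 3 → Even (padicValNat q (A * B)) := by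
    intro q hq hq3
    by_cases hd : q ∣ A * B
    · exact Nat.eq_sq_add_sq_iff.mp ⟨x.natAbs, y.natAbs, hN⟩ q
        (Nat.mem_primeFactors.mpr ⟨hq, hd, Nat.mul_ne_zero (by omega) (by omega)⟩) hq3
    · rw [padicValNat.eq_zero_of_not_dvd hd]; exact Even.zero
  have hA4 : A % 4 = 3 := by omega
  obtain ⟨q, hq, hq3, hodd⟩ := exists_odd_padic_of_mod_four hA4
  haveI : Fact q.Prime := ⟨hq⟩
  have hA0 : A ≠ 0 := by omega
  have hB0 : B ≠ 0 := by omega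
  have hqA : q ∣ A := by
    apply dvd_of_one_le_padicValNat
    obtain ⟨k, hk⟩ := hodd; omega
  have hqa : (q : ℤ) ∣ a := by rw [← hAa]; exact_mod_cast hqA
  have hqB : ¬ q ∣ B := by
    intro hdvd
    have hqb : (q : ℤ) ∣ b := by rw [← hBb]; exact_mod_cast hdvd
    have h3z : (q : ℤ) ∣ 3 * z ^ 2 := by
      have h' : 3 * z ^ 2 = b - ((p : ℤ) + 2 * z) * a := by ring
      rw [h']
      exact dvd_sub hqb (Dvd.dvd.mul_left hqa _)
    have hq3' : ¬ (q : ℤ) ∣ 3 := by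
      intro h3
      have : q ∣ 3 := by exact_mod_cast h3
      have : q = 3 := (Nat.prime_dvd_prime_iff_eq hq (by norm_num)).mp this
      subst this
      have : (3 : ℤ) ∣ a := by exact_mod_cast hqa
      omega
    have hqz2 : (q : ℤ) ∣ z ^ 2 :=
      ((Nat.prime_iff_prime_int.mp hq).dvd_mul.mp h3z).resolve_left hq3'
    have hqz : (q : ℤ) ∣ z := (Nat.prime_iff_prime_int.mp hq).dvd_of_dvd_pow hqz2
    have hqp : (q : ℤ) ∣ (p : ℤ) := by
      have h' : (p : ℤ) = a + z := by ring
      rw [h']; exact dvd_add hqa hqz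
    have hqpn : q ∣ p := by exact_mod_cast hqp
    have : q = p := (Nat.prime_dvd_prime_iff_eq hq hp).mp hqpn
    subst this
    omega
  have hcon := heven q hq hq3
  rw [padicValNat.mul hA0 hB0, padicValNat.eq_zero_of_not_dvd hqB, add_zero] at hcon
  exact (Nat.not_odd_iff_even.mpr hcon) hodd
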